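/- Let a, b, c, d > 0 and set θ := √((a+c+bd)² − 4abd). Then (a+c+bd)² − 4abd = (a+c−bd)² + 4bcd > 0, and the pair x₀ := (a+c+bd−θ)/(2b), y₀ := (a+c−bd+θ)/(2d) is the unique solution (x, y) with x > 0 and y > 0 of the equilibrium equations a − bx − xy = 0 and c − dy + xy = 0. Moreover x₀ > 0, y₀ > 0 and x₀ < d. -/

import Mathlib

set_option maxHeartbeats 1000000 in
/-- With `θ := √((a+c+bd)² − 4abd)`, the quantity under the root is positive
(equal to `(a+c−bd)² + 4bcd`), and `(x₀, y₀) := ((a+c+bd−θ)/(2b), (a+c−bd+θ)/(2d))`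
is the unique positive solution of `a − bx − xy = 0`, `c − dy + xy = 0`;
moreover `x₀ > 0`, `y₀ > 0` and `x₀ < d`. -/
theorem stmt_1 (a b c d : ℝ) (ha : 0 < a) (hb : 0 < b) (hc : 0 < c) (hd : 0 < d) :
    (a + c + b * d) ^ 2 - 4 * a * b * d = (a + c - b * d) ^ 2 + 4 * b * c * d ∧
    0 < (a + c + b * d) ^ 2 - 4 * a * b * d ∧
    (let θ := Real.sqrt ((a + c + b * d) ^ 2 - 4 * a * b * d)
     let x₀ := (a + c + b * d - θ) / (2 * b)
     let y₀ := (a + c - b * d + θ) / (2 * d)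
     0 < x₀ ∧ 0 < y₀ ∧ x₀ < d ∧
     a - b * x₀ - x₀ * y₀ = 0 ∧ c - d * y₀ + x₀ * y₀ = 0 ∧
     ∀ x y : ℝ, 0 < x → 0 < y → a - b * x - x * y = 0 → c - d * y + x * y = 0 →
       x = x₀ ∧ y = y₀) := by
  have heq : (a + c + b * d) ^ 2 - 4 * a * b * d = (a + c - b * d) ^ 2 + 4 * b * c * d := by
    ring
  have hDpos : 0 < (a + c + b * d) ^ 2 - 4 * a * b * d := by
    rw [heq]; positivity
  refine ⟨heq, hDpos, ?_⟩
  intro θ x₀ y₀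
  have hθ2 : θ ^ 2 = (a + c + b * d) ^ 2 - 4 * a * b * d := Real.sq_sqrt hDpos.le
  have hθpos : 0 < θ := Real.sqrt_pos.mpr hDpos
  have habd : 0 < a * b * d := by positivity
  have hbcd : 0 < b * c * d := by positivity
  have hθgt : (a + c - b * d) ^ 2 < θ ^ 2 := by
    rw [hθ2, heq]; nlinarith
  have hlt : θ < a + c + b * d := by
    have hbd : 0 < b * d := mul_pos hb hd
    have hs : 0 < θ + (a + c + b * d) := by linarith
    nlinarith
  have hgt : a + c - b * d < θ := by
    nlinarith [sq_nonneg (θ - (a + c - b * d))]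
  have hgt' : -(a + c - b * d) < θ := by
    nlinarith [sq_nonneg (θ + (a + c - b * d))]
  have hx₀ : 0 < x₀ := div_pos (by linarith) (by linarith)
  have hy₀ : 0 < y₀ := div_pos (by linarith) (by linarith)
  have hx₀d : x₀ < d := by
    rw [show x₀ = (a + c + b * d - θ) / (2 * b) from rfl,
      div_lt_iff₀ (by linarith : (0:ℝ) < 2 * b)]
    linarith
  have hb' : (2 * b) ≠ 0 := by positivity
  have hd' : (2 * d) ≠ 0 := by positivity
  have he1 : a - b * x₀ - x₀ * y₀ = 0 := by
    show a - b * ((a + c + b * d - θ) / (2 * b)) -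
      ((a + c + b * d - θ) / (2 * b)) * ((a + c - b * d + θ) / (2 * d)) = 0
    field_simp
    linear_combination hθ2
  have he2 : c - d * y₀ + x₀ * y₀ = 0 := by
    show c - d * ((a + c - b * d + θ) / (2 * d)) +
      ((a + c + b * d - θ) / (2 * b)) * ((a + c - b * d + θ) / (2 * d)) = 0
    field_simp
    linear_combination (-1) * hθ2
  refine ⟨hx₀, hy₀, hx₀d, he1, he2, ?_⟩
  intro x y hx hy h1 h2
  have hyx : d * y = a + c - b * x := by nlinarith
  have hquad : b * x ^ 2 - (a + c + b * d) * x + a * d = 0 := by nlinarith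
  have hfac : (2 * b * x - (a + c + b * d - θ)) * (2 * b * x - (a + c + b * d + θ)) = 0 := by
    linear_combination 4 * b * hquad - hθ2
  rcases mul_eq_zero.mp hfac with h | h
  · constructor
    · show x = (a + c + b * d - θ) / (2 * b)
      rw [eq_div_iff hb']; linarith
    · show y = (a + c - b * d + θ) / (2 * d)
      rw [eq_div_iff hd']; linarith
  · exfalso
    have hy' : 2 * (d * y) = a + c - b * d - θ := by linarith
    nlinarith [mul_pos hd hy]
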